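/- Let G = (V, 𝓔) be a hypergraph with activity parameter λ > 0, let v ∈ V be a vertex of degree d whose incident hyperedges are e₁, …, e_d with e_i = {v} ∪ {v_{i1}, …, v_{i w_i}}. Let G' be the hypergraph obtained from G by replacing v with d copies v₁, …, v_d, where each e_i is replaced by e_i − v + v_i. For i ∈ [d] and j ∈ [w_i] define G_{ij} := G' − {v_k : i ≤ k ≤ d} − {e_k : 1 ≤ k ≤ i} − {v_{ik} : 1 ≤ k < j} (deleting a vertex removes it from every hyperedge; deleting a hyperedge removes it from the edge set). Set R_v = Pr_G[v ∈ I]/Pr_G[v ∉ I] and R_{ij} = Pr_{G_{ij}}[v_{ij} ∈ I]/Pr_{G_{ij}}[v_{ij} ∉ I]. Then R_v = λ · ∏_{i=1}^d ( 1 − ∏_{j=1}^{w_i} R_{ij}/(1 + R_{ij}) ). -/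

import Mathlib

/-- A hypergraph: a finite vertex set together with a finite set of hyperedges,
    each a finite set of vertices. -/
structure HGraph where
  V : Finset ℕ
  E : Finset (Finset ℕ)

namespace HGraph

/-- `I` is an independent set of `G`: no hyperedge is contained in `I`. -/
def indep (G : HGraph) (I : Finset ℕ) : Prop := ∀ e ∈ G.E, ¬ e ⊆ I

open scoped Classical in
/-- The hardcore partition function Z(G) = Σ_{I independent} λ^{|I|}. -/
noncomputable def Z (G : HGraph) (lam : ℝ) : ℝ :=
  ∑ I ∈ G.V.powerset, if G.indep I then lam ^ I.card else 0

open scoped Classical in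
/-- The Gibbs probability of the event `p` (a predicate on independent sets). -/
noncomputable def prob (G : HGraph) (lam : ℝ) (p : Finset ℕ → Prop) : ℝ :=
  (∑ I ∈ G.V.powerset, if G.indep I ∧ p I then lam ^ I.card else 0) / G.Z lam

/-- The marginal ratio R_u = Pr_G[u ∈ I] / Pr_G[u ∉ I]. -/
noncomputable def Rratio (G : HGraph) (lam : ℝ) (u : ℕ) : ℝ :=
  G.prob lam (fun I => u ∈ I) / G.prob lam (fun I => u ∉ I)

/-- Delete a set of vertices: remove them from the vertex set and from every
    hyperedge (iterating `G − v` over the set `S`). -/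
def delVs (G : HGraph) (S : Finset ℕ) : HGraph :=
  ⟨G.V \ S, G.E.image (fun e => e \ S)⟩

/-- Delete a set of hyperedges from the edge set (iterating `G − e`). -/
def delEs (G : HGraph) (F : Finset (Finset ℕ)) : HGraph :=
  ⟨G.V, G.E \ F⟩

end HGraph

namespace HGraph
open Finset
open scoped Classical

noncomputable def Nin (G : HGraph) (lam : ℝ) (u : ℕ) : ℝ :=
  ∑ I ∈ G.V.powerset, if G.indep I ∧ u ∈ I then lam ^ I.card else 0

noncomputable def Nout (G : HGraph) (lam : ℝ) (u : ℕ) : ℝ :=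
  ∑ I ∈ G.V.powerset, if G.indep I ∧ u ∉ I then lam ^ I.card else 0

variable {lam : ℝ}

lemma term_nonneg (hlam : 0 < lam) (P : Prop) [Decidable P] (c : ℕ) :
    0 ≤ if P then lam ^ c else 0 := by
  split <;> positivity

lemma Z_nonneg (hlam : 0 < lam) (G : HGraph) : 0 ≤ G.Z lam :=
  Finset.sum_nonneg fun _ _ => by first | (dsimp only; split <;> positivity) | (split <;> positivity)

lemma Nin_nonneg (hlam : 0 < lam) (G : HGraph) (u : ℕ) : 0 ≤ G.Nin lam u :=
  Finset.sum_nonneg fun _ _ => by first | (dsimp only; split <;> positivity) | (split <;> positivity)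

lemma Nout_nonneg (hlam : 0 < lam) (G : HGraph) (u : ℕ) : 0 ≤ G.Nout lam u :=
  Finset.sum_nonneg fun _ _ => by first | (dsimp only; split <;> positivity) | (split <;> positivity)

lemma indep_empty {G : HGraph} (h : ∅ ∉ G.E) : G.indep ∅ := by
  intro e he hsub
  exact h (by rwa [Finset.subset_empty.mp hsub] at he)

lemma Z_ge_of_indep (hlam : 0 < lam) {G : HGraph} {I : Finset ℕ}
    (hI : I ⊆ G.V) (hind : G.indep I) : lam ^ I.card ≤ G.Z lam := by
  have := Finset.single_le_sum (f := fun J => if G.indep J then lam ^ J.card else 0)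
    (fun J _ => by first | (dsimp only; split <;> positivity) | (split <;> positivity)) (Finset.mem_powerset.mpr hI)
  simpa [Z, hind] using this

lemma Z_pos (hlam : 0 < lam) {G : HGraph} (h : ∅ ∉ G.E) : 0 < G.Z lam := by
  have := Z_ge_of_indep hlam (Finset.empty_subset G.V) (indep_empty h)
  simpa using lt_of_lt_of_le (by norm_num) this

lemma Nout_pos (hlam : 0 < lam) {G : HGraph} (h : ∅ ∉ G.E) (u : ℕ) :
    0 < G.Nout lam u := by
  have := Finset.single_le_sum
    (f := fun J => if G.indep J ∧ u ∉ J then lam ^ J.card else 0)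
    (fun J _ => by first | (dsimp only; split <;> positivity) | (split <;> positivity))
    (Finset.mem_powerset.mpr (Finset.empty_subset G.V))
  have h2 : (1:ℝ) ≤ G.Nout lam u := by
    simpa [Nout, indep_empty h] using this
  linarith

lemma Z_eq_Nin_add_Nout (G : HGraph) (lam : ℝ) (u : ℕ) :
    G.Z lam = G.Nin lam u + G.Nout lam u := by
  rw [Z, Nin, Nout, ← Finset.sum_add_distrib]
  refine Finset.sum_congr rfl fun I _ => ?_
  by_cases hind : G.indep I <;> by_cases hu : u ∈ I <;> simp [hind, hu]

lemma Z_eq_zero_of_empty_mem {G : HGraph} (h : ∅ ∈ G.E) : G.Z lam = 0 := by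
  rw [Z]
  refine Finset.sum_eq_zero fun I _ => ?_
  have : ¬ G.indep I := fun hind => hind ∅ h (Finset.empty_subset I)
  simp [this]

lemma exists_indep_of_Z_ne_zero {G : HGraph} (h : G.Z lam ≠ 0) :
    ∃ I ⊆ G.V, G.indep I := by
  by_contra hc
  push_neg at hc
  refine h (Finset.sum_eq_zero fun I hI => ?_)
  have : ¬ G.indep I := hc I (Finset.mem_powerset.mp hI)
  simp [this]

end HGraph
namespace HGraph
open Finset
open scoped Classical

variable {lam : ℝ}

lemma delVs_delVs (G : HGraph) (S T : Finset ℕ) :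
    (G.delVs S).delVs T = G.delVs (S ∪ T) := by
  unfold delVs
  congr 1
  · ext x; simp only [Finset.mem_sdiff, Finset.mem_union]; tauto
  · rw [Finset.image_image]
    refine Finset.image_congr fun e _ => ?_
    simp only [Function.comp_apply]
    ext x; simp only [Finset.mem_sdiff, Finset.mem_union]; tauto

lemma delVs_empty (G : HGraph) : G.delVs ∅ = G := by
  unfold delVs
  cases G with
  | mk V E => simp

/-- Pinning lemma: the weighted sum of independent sets containing `S`. -/
lemma pin (hlam : 0 < lam) (G : HGraph) {S : Finset ℕ} (hS : S ⊆ G.V) :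
    (∑ I ∈ G.V.powerset, if G.indep I ∧ S ⊆ I then lam ^ I.card else 0)
      = lam ^ S.card * (G.delVs S).Z lam := by
  rw [Z, Finset.mul_sum]
  rw [← Finset.sum_filter_add_sum_filter_not G.V.powerset (fun I => S ⊆ I)]
  have h2 : ∑ I ∈ G.V.powerset.filter (fun I => ¬ S ⊆ I),
      (if G.indep I ∧ S ⊆ I then lam ^ I.card else 0) = 0 := by
    refine Finset.sum_eq_zero fun I hI => ?_
    rw [Finset.mem_filter] at hI
    simp [hI.2]
  rw [h2, add_zero]
  refine Finset.sum_nbij' (fun I => I \ S) (fun J => J ∪ S) ?_ ?_ ?_ ?_ ?_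
  · intro I hI
    rw [Finset.mem_filter, Finset.mem_powerset] at hI
    rw [Finset.mem_powerset]
    exact Finset.sdiff_subset_sdiff hI.1 (le_refl S)
  · intro J hJ
    rw [Finset.mem_powerset] at hJ
    simp only [Finset.mem_filter, Finset.mem_powerset]
    exact ⟨Finset.union_subset (hJ.trans Finset.sdiff_subset) hS, Finset.subset_union_right⟩
  · intro I hI
    rw [Finset.mem_filter] at hI
    show I \ S ∪ S = I
    rw [Finset.sdiff_union_self_eq_union, Finset.union_eq_left.mpr hI.2]
  · intro J hJ
    rw [Finset.mem_powerset] at hJ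
    have hx : ∀ x ∈ J, x ∉ S := fun x hxJ => (Finset.mem_sdiff.mp (hJ hxJ)).2
    show (J ∪ S) \ S = J
    ext x
    simp only [Finset.mem_sdiff, Finset.mem_union]
    constructor
    · rintro ⟨h1 | h1, h2⟩
      · exact h1
      · exact absurd h1 h2
    · intro h; exact ⟨Or.inl h, hx x h⟩
  · intro I hI
    rw [Finset.mem_filter, Finset.mem_powerset] at hI
    obtain ⟨hIV, hSI⟩ := hI
    have hsub : ∀ e : Finset ℕ, e ⊆ I ↔ e \ S ⊆ I \ S := by
      intro e
      constructor
      · intro h; exact Finset.sdiff_subset_sdiff h (le_refl S)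
      · intro h x hx
        by_cases hxS : x ∈ S
        · exact hSI hxS
        · have := h (Finset.mem_sdiff.mpr ⟨hx, hxS⟩)
          exact (Finset.mem_sdiff.mp this).1
    have hindep : G.indep I ↔ (G.delVs S).indep (I \ S) := by
      constructor
      · intro h e' he'
        rw [delVs] at he'
        simp only [Finset.mem_image] at he'
        obtain ⟨e, he, rfl⟩ := he'
        exact fun hc => h e he ((hsub e).mpr hc)
      · intro h e he hc
        refine h (e \ S) ?_ ((hsub e).mp hc)
        rw [delVs]
        simp only [Finset.mem_image]
        exact ⟨e, he, rfl⟩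
    have hcard : I.card = S.card + (I \ S).card := by
      have h1 := Finset.card_sdiff_of_subset hSI
      have h2 := Finset.card_le_card hSI
      omega
    by_cases hind : G.indep I
    · rw [if_pos ⟨hind, hSI⟩, if_pos (hindep.mp hind), hcard, pow_add]
    · rw [if_neg (fun h => hind h.1), if_neg (fun h => hind (hindep.mpr h))]
      ring

lemma Nin_eq (hlam : 0 < lam) (G : HGraph) {u : ℕ} (hu : u ∈ G.V) :
    G.Nin lam u = lam * (G.delVs {u}).Z lam := by
  have := pin hlam G (Finset.singleton_subset_iff.mpr hu)
  have h1 : G.Nin lam u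
      = ∑ I ∈ G.V.powerset, if G.indep I ∧ {u} ⊆ I then lam ^ I.card else 0 := by
    unfold Nin
    exact Finset.sum_congr rfl fun I _ =>
      if_congr (and_congr Iff.rfl Finset.singleton_subset_iff.symm) rfl rfl
  rw [h1, this]
  simp

lemma Nout_eq (G : HGraph) (u : ℕ) :
    G.Nout lam u = Z ⟨G.V.erase u, G.E.filter (fun e => u ∉ e)⟩ lam := by
  rw [Nout, Z]
  rw [← Finset.sum_subset (Finset.powerset_mono.mpr (Finset.erase_subset u G.V))]
  · refine Finset.sum_congr rfl fun I hI => ?_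
    rw [Finset.mem_powerset] at hI
    have huI : u ∉ I := fun h => (Finset.mem_erase.mp (hI h)).1 rfl
    have : G.indep I ↔ HGraph.indep ⟨G.V.erase u, G.E.filter (fun e => u ∉ e)⟩ I := by
      constructor
      · intro h e he
        exact h e (Finset.mem_filter.mp he).1
      · intro h e he hc
        have hue : u ∉ e := fun hue => huI (hc hue)
        exact h e (Finset.mem_filter.mpr ⟨he, hue⟩) hc
    by_cases hind : G.indep I
    · rw [if_pos ⟨hind, huI⟩, if_pos (this.mp hind)]
    · rw [if_neg (fun hh => hind hh.1), if_neg (fun hh => hind (this.mpr hh))]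
  · intro I hI hnI
    rw [Finset.mem_powerset] at hI hnI
    have : u ∈ I := by
      by_contra hc
      exact hnI (fun x hx => Finset.mem_erase.mpr ⟨fun h => hc (h ▸ hx), hI hx⟩)
    simp [this]

lemma Z_delVs_eq_zero (hlam : 0 < lam) {G : HGraph} (h : G.Z lam = 0)
    (S : Finset ℕ) : (G.delVs S).Z lam = 0 := by
  by_contra hc
  obtain ⟨J, hJ, hind⟩ := exists_indep_of_Z_ne_zero hc
  have hJV : J ⊆ G.V := hJ.trans Finset.sdiff_subset
  have hindG : G.indep J := by
    intro e he hsub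
    refine hind (e \ S) ?_ ?_
    · rw [delVs]; simp only [Finset.mem_image]; exact ⟨e, he, rfl⟩
    · exact Finset.sdiff_subset.trans hsub
  have := Z_ge_of_indep hlam hJV hindG
  have hp : (0:ℝ) < lam ^ J.card := by positivity
  linarith [h ▸ this]

end HGraph
namespace HGraph
open Finset
open scoped Classical

variable {lam : ℝ}

lemma empty_not_mem_of_Z_ne_zero {G : HGraph} (h : G.Z lam ≠ 0) : ∅ ∉ G.E :=
  fun hc => h (Z_eq_zero_of_empty_mem hc)

lemma prob_in_eq (G : HGraph) (lam : ℝ) (u : ℕ) :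
    G.prob lam (fun I => u ∈ I) = G.Nin lam u / G.Z lam := by
  rw [prob, Nin]
  congr 1
  refine Finset.sum_congr rfl fun I _ => ?_
  split <;> rename_i h
  · rfl
  · rfl

lemma prob_out_eq (G : HGraph) (lam : ℝ) (u : ℕ) :
    G.prob lam (fun I => u ∉ I) = G.Nout lam u / G.Z lam := by
  rw [prob, Nout]
  congr 1
  refine Finset.sum_congr rfl fun I _ => ?_
  split <;> rename_i h
  · rfl
  · rfl

lemma Rratio_eq_div (hlam : 0 < lam) (G : HGraph) (u : ℕ) (hZ : G.Z lam ≠ 0) :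
    G.Rratio lam u = G.Nin lam u / G.Nout lam u := by
  have hO : 0 < G.Nout lam u := Nout_pos hlam (empty_not_mem_of_Z_ne_zero hZ) u
  rw [Rratio, prob_in_eq, prob_out_eq]
  field_simp

lemma ratio_eq (hlam : 0 < lam) (G : HGraph) (u : ℕ) :
    G.Rratio lam u / (1 + G.Rratio lam u) = G.Nin lam u / G.Z lam := by
  by_cases hZ : G.Z lam = 0
  · have hNO := Z_eq_Nin_add_Nout G lam u
    have hN0 : G.Nin lam u = 0 := by
      have := Nin_nonneg hlam G u
      have := Nout_nonneg hlam G u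
      linarith [hZ ▸ hNO]
    rw [Rratio, prob_in_eq, hN0, hZ]
    simp
  · have hO : 0 < G.Nout lam u := Nout_pos hlam (empty_not_mem_of_Z_ne_zero hZ) u
    have hN : 0 ≤ G.Nin lam u := Nin_nonneg hlam G u
    rw [Rratio_eq_div hlam G u hZ]
    have hZNO := Z_eq_Nin_add_Nout G lam u
    have h1 : 1 + G.Nin lam u / G.Nout lam u = G.Z lam / G.Nout lam u := by
      field_simp
      linarith
    rw [h1]
    rw [div_div_div_cancel_right₀]
    exact hO.ne'

lemma Z_insert_iso (x : ℕ) (V : Finset ℕ) (E : Finset (Finset ℕ))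
    (hx : x ∉ V) (hxe : ∀ e ∈ E, x ∉ e) :
    Z ⟨insert x V, E⟩ lam = (1 + lam) * Z ⟨V, E⟩ lam := by
  have hind : ∀ J : Finset ℕ, x ∉ J →
      (HGraph.indep ⟨insert x V, E⟩ (insert x J) ↔ HGraph.indep ⟨V, E⟩ J) := by
    intro J hJ
    constructor
    · intro h e he hc
      exact h e he (hc.trans (Finset.subset_insert x J))
    · intro h e he hc
      exact h e he ((Finset.subset_insert_iff_of_notMem (hxe e he)).mp hc)
  have hindsame : ∀ J : Finset ℕ,
      HGraph.indep ⟨insert x V, E⟩ J ↔ HGraph.indep ⟨V, E⟩ J := fun J => Iff.rfl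
  rw [Z, Z]
  rw [Finset.powerset_insert]
  have hdisj : Disjoint V.powerset (V.powerset.image (insert x)) := by
    rw [Finset.disjoint_left]
    intro I hI hI2
    obtain ⟨J, hJ, rfl⟩ := Finset.mem_image.mp hI2
    exact hx (Finset.mem_powerset.mp hI (Finset.mem_insert_self x J))
  rw [Finset.sum_union hdisj]
  have hinj : ∀ a ∈ V.powerset, ∀ b ∈ V.powerset, insert x a = insert x b → a = b := by
    intro a ha b hb hab
    have hxa : x ∉ a := fun h => hx (Finset.mem_powerset.mp ha h)
    have hxb : x ∉ b := fun h => hx (Finset.mem_powerset.mp hb h)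
    ext y
    constructor
    · intro hy
      have : y ∈ insert x b := hab ▸ Finset.mem_insert_of_mem hy
      rcases Finset.mem_insert.mp this with h | h
      · exact absurd (h ▸ hy) hxa
      · exact h
    · intro hy
      have : y ∈ insert x a := hab ▸ Finset.mem_insert_of_mem hy
      rcases Finset.mem_insert.mp this with h | h
      · exact absurd (h ▸ hy) hxb
      · exact h
  rw [Finset.sum_image hinj]
  have h2 : ∑ J ∈ V.powerset,
      (if HGraph.indep ⟨insert x V, E⟩ (insert x J) then lam ^ (insert x J).card else 0)
      = lam * ∑ J ∈ V.powerset, (if HGraph.indep ⟨V, E⟩ J then lam ^ J.card else 0) := by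
    rw [Finset.mul_sum]
    refine Finset.sum_congr rfl fun J hJ => ?_
    have hxJ : x ∉ J := fun h => hx (Finset.mem_powerset.mp hJ h)
    rw [Finset.card_insert_of_notMem hxJ]
    by_cases h : HGraph.indep ⟨V, E⟩ J
    · rw [if_pos ((hind J hxJ).mpr h), if_pos h, pow_succ]
      ring
    · rw [if_neg (fun hh => h ((hind J hxJ).mp hh)), if_neg h]
      ring
  rw [h2]
  have h3 : ∑ J ∈ V.powerset,
      (if HGraph.indep ⟨insert x V, E⟩ J then lam ^ J.card else 0)
      = ∑ J ∈ V.powerset, (if HGraph.indep ⟨V, E⟩ J then lam ^ J.card else 0) := by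
    refine Finset.sum_congr rfl fun J _ => ?_
    by_cases h : HGraph.indep ⟨V, E⟩ J
    · rw [if_pos ((hindsame J).mpr h), if_pos h]
    · rw [if_neg (fun hh => h ((hindsame J).mp hh)), if_neg h]
  rw [h3]
  ring

lemma Z_union_iso (V : Finset ℕ) (E : Finset (Finset ℕ)) (W : Finset ℕ)
    (hW : ∀ x ∈ W, x ∉ V) (hWE : ∀ x ∈ W, ∀ e ∈ E, x ∉ e) :
    Z ⟨V ∪ W, E⟩ lam = (1 + lam) ^ W.card * Z ⟨V, E⟩ lam := by
  induction W using Finset.induction_on with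
  | empty => simp
  | @insert a W' ha ih =>
    have h1 : V ∪ insert a W' = insert a (V ∪ W') := by
      ext y; simp only [Finset.mem_union, Finset.mem_insert]; tauto
    rw [h1, Z_insert_iso a (V ∪ W') E
        (fun hc => by
          rcases Finset.mem_union.mp hc with h | h
          · exact hW a (Finset.mem_insert_self a W') h
          · exact ha h)
        (fun e he => hWE a (Finset.mem_insert_self a W') e he),
      ih (fun x hx => hW x (Finset.mem_insert_of_mem hx))
        (fun x hx => hWE x (Finset.mem_insert_of_mem hx)),
      Finset.card_insert_of_notMem ha, pow_succ]
    ring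

lemma Z_split_edge (hlam : 0 < lam) (G : HGraph) {S : Finset ℕ} (hS : S ⊆ G.V) :
    G.Z lam = Z ⟨G.V, insert S G.E⟩ lam + lam ^ S.card * (G.delVs S).Z lam := by
  rw [← pin hlam G hS]
  nth_rewrite 1 [Z]
  rw [Z]
  rw [← Finset.sum_add_distrib]
  refine Finset.sum_congr rfl fun I hI => ?_
  have hiff : HGraph.indep ⟨G.V, insert S G.E⟩ I ↔ (G.indep I ∧ ¬ S ⊆ I) := by
    constructor
    · intro h
      exact ⟨fun e he => h e (Finset.mem_insert_of_mem he), h S (Finset.mem_insert_self S G.E)⟩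
    · rintro ⟨h1, h2⟩ e he
      rcases Finset.mem_insert.mp he with rfl | he'
      · exact h2
      · exact h1 e he'
  by_cases hind : G.indep I
  · by_cases hsub : S ⊆ I
    · rw [if_pos hind, if_neg (fun h => (hiff.mp h).2 hsub), if_pos ⟨hind, hsub⟩]
      ring
    · rw [if_pos hind, if_pos (hiff.mpr ⟨hind, hsub⟩), if_neg (fun h => hsub h.2)]
      ring
  · rw [if_neg hind, if_neg (fun h => hind (hiff.mp h).1), if_neg (fun h => hind h.1)]
    ring

lemma prod_div_telescope (z : ℕ → ℝ) :
    ∀ d : ℕ, (∀ s, s ≤ d → z s ≠ 0) →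
      ∏ s ∈ Finset.range d, z s / z (s + 1) = z 0 / z d := by
  intro d
  induction d with
  | zero => intro h; simp [div_self (h 0 (le_refl 0))]
  | succ n ih =>
    intro h
    rw [Finset.prod_range_succ, ih (fun s hs => h s (hs.trans (Nat.le_succ n)))]
    have hn : z n ≠ 0 := h n (Nat.le_succ n)
    field_simp

lemma prod_ratio_telescope (lam : ℝ) (z : ℕ → ℝ) (h0 : z 0 ≠ 0)
    (hm : ∀ j, z j = 0 → z (j + 1) = 0) :
    ∀ w : ℕ, ∏ j ∈ Finset.range w, lam * z (j + 1) / z j = lam ^ w * z w / z 0 := by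
  intro w
  induction w with
  | zero => simp [div_self h0]
  | succ n ih =>
    rw [Finset.prod_range_succ, ih]
    by_cases hz : z n = 0
    · rw [hm n hz, hz]
      simp
    · field_simp
      ring

end HGraph
namespace HGraph
open Finset
open scoped Classical

lemma A_structure (G : HGraph) (hGE : ∀ e ∈ G.E, e ⊆ G.V) (v : ℕ)
    (d : ℕ) (eset : Fin d → Finset ℕ) (vc : Fin d → ℕ)
    (hvcinj : Function.Injective vc) (hvcfresh : ∀ k, vc k ∉ G.V)
    (hesetV : ∀ k, eset k ⊆ G.V) (hesetinj : Function.Injective eset)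
    (hnosub : ∀ k, eset k ∉ G.E) (i : Fin d) :
    delEs
      (delVs ⟨(G.V.erase v) ∪ Finset.image vc Finset.univ,
          (G.E.filter (fun e => v ∉ e)) ∪
            Finset.image (fun k => insert (vc k) (eset k)) Finset.univ⟩
        (Finset.image vc (Finset.filter (fun k => i ≤ k) Finset.univ)))
      (insert (eset i)
        (Finset.image (fun k => insert (vc k) (eset k))
          (Finset.filter (fun k => k < i) Finset.univ)))
    = ⟨(G.V.erase v) ∪ Finset.image vc (Finset.filter (fun k => k < i) Finset.univ),
        (G.E.filter (fun e => v ∉ e)) ∪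
          Finset.image eset (Finset.filter (fun k => i < k) Finset.univ)⟩ := by
  set E0 := G.E.filter (fun e => v ∉ e) with hE0
  set S := Finset.image vc (Finset.filter (fun k => i ≤ k) Finset.univ) with hSdef
  set f := fun k : Fin d => insert (vc k) (eset k) with hf
  have hE0G : ∀ e ∈ E0, e ⊆ G.V := fun e he => hGE e (Finset.mem_filter.mp he).1
  have hSnotG : ∀ x ∈ S, x ∉ G.V := by
    intro x hx
    obtain ⟨k, _, rfl⟩ := Finset.mem_image.mp hx
    exact hvcfresh k
  have hs1 : ∀ e ∈ E0, e \ S = e := by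
    intro e he
    apply Finset.sdiff_eq_self_of_disjoint
    rw [Finset.disjoint_left]
    exact fun x hx hxS => hSnotG x hxS (hE0G e he hx)
  have hesetS : ∀ k, eset k \ S = eset k := by
    intro k
    apply Finset.sdiff_eq_self_of_disjoint
    rw [Finset.disjoint_left]
    exact fun x hx hxS => hSnotG x hxS (hesetV k hx)
  have hvcS : ∀ k : Fin d, vc k ∈ S ↔ i ≤ k := by
    intro k
    constructor
    · intro h
      obtain ⟨m, hm, hmk⟩ := Finset.mem_image.mp h
      rw [hvcinj hmk] at hm
      exact (Finset.mem_filter.mp hm).2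
    · intro h
      exact Finset.mem_image.mpr ⟨k, Finset.mem_filter.mpr ⟨Finset.mem_univ k, h⟩, rfl⟩
  have hs2 : ∀ k : Fin d, f k \ S = if i ≤ k then eset k else f k := by
    intro k
    by_cases h : i ≤ k
    · rw [if_pos h, hf]
      simp only [Finset.insert_sdiff_of_mem _ ((hvcS k).mpr h)]
      exact hesetS k
    · rw [if_neg h, hf]
      simp only
      rw [Finset.insert_sdiff_of_notMem _ (fun hc => h ((hvcS k).mp hc)), hesetS k]
  simp only [delVs, delEs]
  congr 1
  -- vertex sets
  · ext x
    simp only [Finset.mem_sdiff, Finset.mem_union, Finset.mem_image, Finset.mem_filter,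
      Finset.mem_univ, true_and, Finset.mem_erase, hSdef]
    constructor
    · rintro ⟨hx | ⟨k, rfl⟩, hnS⟩
      · exact Or.inl hx
      · refine Or.inr ⟨k, ?_, rfl⟩
        by_contra hk
        exact hnS ⟨k, not_lt.mp hk, rfl⟩
    · rintro (hx | ⟨k, hk, rfl⟩)
      · refine ⟨Or.inl hx, fun hc => ?_⟩
        obtain ⟨m, _, rfl⟩ := hc
        exact hvcfresh m hx.2
      · refine ⟨Or.inr ⟨k, rfl⟩, fun hc => ?_⟩
        obtain ⟨m, hm, hmk⟩ := hc
        rw [hvcinj hmk] at hm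
        exact absurd hk (not_lt.mpr hm)
  -- edge sets
  · have himg : Finset.image (fun e => e \ S) (E0 ∪ Finset.image f Finset.univ)
        = E0 ∪ Finset.image (fun k => if i ≤ k then eset k else f k) Finset.univ := by
      rw [Finset.image_union, Finset.image_image]
      congr 1
      · exact Finset.image_congr (fun e he => hs1 e he) |>.trans Finset.image_id
      · exact Finset.image_congr fun k _ => hs2 k
    rw [himg]
    ext e'
    simp only [Finset.mem_sdiff, Finset.mem_union, Finset.mem_image, Finset.mem_filter,
      Finset.mem_univ, true_and, Finset.mem_insert]
    constructor
    · rintro ⟨he | ⟨k, rfl⟩, hnF⟩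
      · exact Or.inl he
      · by_cases h : i ≤ k
        · rw [if_pos h]
          rw [if_pos h] at hnF
          have hki : k ≠ i := by
            rintro rfl
            exact hnF (Or.inl rfl)
          exact Or.inr ⟨k, lt_of_le_of_ne h (fun hc => hki hc.symm), rfl⟩
        · rw [if_neg h] at hnF
          exact absurd (Or.inr ⟨k, not_le.mp h, rfl⟩) hnF
    · rintro (he | ⟨k, hk, rfl⟩)
      · refine ⟨Or.inl he, ?_⟩
        rintro (rfl | ⟨m, hm, hme⟩)
        · exact hnosub i (Finset.mem_filter.mp he).1
        · have : vc m ∈ e' := hme ▸ Finset.mem_insert_self _ _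
          exact hvcfresh m (hE0G e' he this)
      · refine ⟨Or.inr ⟨k, by rw [if_pos (le_of_lt hk)]⟩, ?_⟩
        rintro (heq | ⟨m, hm, hme⟩)
        · exact absurd (hesetinj heq) (ne_of_gt hk)
        · have : vc m ∈ eset k := hme ▸ Finset.mem_insert_self _ _
          exact hvcfresh m (hesetV k this)

end HGraph
namespace HGraph
open Finset
open scoped Classical

lemma stepB (lam : ℝ) (hlam : 0 < lam) (G : HGraph)
    (hGE : ∀ e ∈ G.E, e ⊆ G.V) (hGne : ∅ ∉ G.E)
    (v : ℕ) (d : ℕ) (w : Fin d → ℕ) (vij : Fin d → ℕ → ℕ)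
    (hvmem : ∀ i j, j < w i → vij i j ∈ G.V)
    (hvne : ∀ i j, j < w i → vij i j ≠ v)
    (hvinj : ∀ i, Set.InjOn (vij i) {j : ℕ | j < w i})
    (eset : Fin d → Finset ℕ)
    (heset : ∀ i, eset i = Finset.image (vij i) (Finset.range (w i)))
    (hnosub : ∀ i, eset i ∉ G.E)
    (hesetinj : Function.Injective eset)
    (vc : Fin d → ℕ) (hvcinj : Function.Injective vc) (hvcfresh : ∀ i, vc i ∉ G.V)
    (Gij : Fin d → ℕ → HGraph)
    (hGij : ∀ (i : Fin d), ∀ j < w i, Gij i j =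
        delVs
          (delEs
            (delVs ⟨(G.V.erase v) ∪ Finset.image vc Finset.univ,
                (G.E.filter (fun e => v ∉ e)) ∪
                  Finset.image (fun k => insert (vc k) (eset k)) Finset.univ⟩
              (Finset.image vc (Finset.filter (fun k => i ≤ k) Finset.univ)))
            (insert (eset i)
              (Finset.image (fun k => insert (vc k) (eset k))
                (Finset.filter (fun k => k < i) Finset.univ))))
          (Finset.image (vij i) (Finset.range j)))
    (Rij : Fin d → ℕ → ℝ)
    (hRij : ∀ (i : Fin d), ∀ j < w i, Rij i j = (Gij i j).Rratio lam (vij i j))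
    (hwpos : ∀ k, 0 < w k) (i : Fin d) :
    (1 - ∏ j ∈ Finset.range (w i), Rij i j / (1 + Rij i j))
      = Z ⟨G.V.erase v, (G.E.filter (fun e => v ∉ e)) ∪
            Finset.image eset (Finset.filter (fun k : Fin d => (i : ℕ) ≤ (k : ℕ)) Finset.univ)⟩ lam
        / Z ⟨G.V.erase v, (G.E.filter (fun e => v ∉ e)) ∪
            Finset.image eset (Finset.filter (fun k : Fin d => (i : ℕ) + 1 ≤ (k : ℕ)) Finset.univ)⟩ lam := by
  have hesetV : ∀ k, eset k ⊆ G.V.erase v := by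
    intro k x hx
    rw [heset k] at hx
    obtain ⟨j, hj, rfl⟩ := Finset.mem_image.mp hx
    rw [Finset.mem_range] at hj
    exact Finset.mem_erase.mpr ⟨hvne k j hj, hvmem k j hj⟩
  have hesetG : ∀ k, eset k ⊆ G.V := fun k => (hesetV k).trans (Finset.erase_subset v G.V)
  have hesetne : ∀ k, (eset k).Nonempty := by
    intro k
    refine ⟨vij k 0, ?_⟩
    rw [heset k]
    exact Finset.mem_image.mpr ⟨0, Finset.mem_range.mpr (hwpos k), rfl⟩
  have hA := A_structure G hGE v d eset vc hvcinj hvcfresh hesetG hesetinj hnosub i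
  set V' := G.V.erase v with hV'
  set E0 := G.E.filter (fun e => v ∉ e) with hE0
  set W := Finset.image vc (Finset.filter (fun k => k < i) Finset.univ) with hW
  set Aexp : HGraph :=
    ⟨V' ∪ W, E0 ∪ Finset.image eset (Finset.filter (fun k => i < k) Finset.univ)⟩ with hAexp
  -- facts about Aexp
  have hAne : ∅ ∉ Aexp.E := by
    intro hc
    rcases Finset.mem_union.mp hc with h | h
    · exact hGne (Finset.mem_filter.mp h).1
    · obtain ⟨k, _, hk⟩ := Finset.mem_image.mp h
      exact (hesetne k).ne_empty hk
  have hApos : 0 < Aexp.Z lam := Z_pos hlam hAne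
  set zf : ℕ → ℝ :=
    fun j => ((Aexp.delVs (Finset.image (vij i) (Finset.range j))).Z lam) with hzf
  have hz0 : zf 0 = Aexp.Z lam := by
    simp only [hzf, Finset.range_zero, Finset.image_empty, delVs_empty]
  have hins : ∀ j : ℕ,
      Finset.image (vij i) (Finset.range j) ∪ {vij i j}
        = Finset.image (vij i) (Finset.range (j + 1)) := by
    intro j
    rw [Finset.range_add_one, Finset.image_insert]
    ext x
    simp only [Finset.mem_union, Finset.mem_insert, Finset.mem_singleton]
    tauto
  have hmono : ∀ j, zf j = 0 → zf (j + 1) = 0 := by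
    intro j hj
    simp only [hzf] at hj ⊢
    rw [← hins j, ← delVs_delVs]
    exact Z_delVs_eq_zero hlam hj _
  have hterm : ∀ j ∈ Finset.range (w i),
      Rij i j / (1 + Rij i j) = lam * zf (j + 1) / zf j := by
    intro j hj
    rw [Finset.mem_range] at hj
    rw [hRij i j hj, ratio_eq hlam]
    have hGd : Gij i j = Aexp.delVs (Finset.image (vij i) (Finset.range j)) := by
      rw [hGij i j hj, hA]
    have hmemA : vij i j ∈ (Gij i j).V := by
      rw [hGd]
      refine Finset.mem_sdiff.mpr ⟨Finset.mem_union_left _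
        (Finset.mem_erase.mpr ⟨hvne i j hj, hvmem i j hj⟩), ?_⟩
      intro hc
      obtain ⟨m, hm, hme⟩ := Finset.mem_image.mp hc
      rw [Finset.mem_range] at hm
      exact absurd (hvinj i (hm.trans hj) hj hme) (Nat.ne_of_lt hm)
    rw [Nin_eq hlam _ hmemA]
    have h2 : (Gij i j).delVs {vij i j}
        = Aexp.delVs (Finset.image (vij i) (Finset.range (j + 1))) := by
      rw [hGd, delVs_delVs, hins j]
    rw [h2, hGd]
  rw [Finset.prod_congr rfl hterm,
    prod_ratio_telescope lam zf (by rw [hz0]; exact hApos.ne') hmono (w i), hz0]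
  have hzw : zf (w i) = (Aexp.delVs (eset i)).Z lam := by
    simp only [hzf]
    rw [← heset i]
  have hcard : (eset i).card = w i := by
    rw [heset i, Finset.card_image_of_injOn, Finset.card_range]
    intro a ha b hb hab
    rw [Finset.coe_range, Set.mem_Iio] at ha hb
    exact hvinj i ha hb hab
  have hsplit := Z_split_edge hlam Aexp ((hesetV i).trans Finset.subset_union_left)
  rw [hcard] at hsplit
  have key : 1 - lam ^ (w i) * zf (w i) / Aexp.Z lam
      = Z ⟨Aexp.V, insert (eset i) Aexp.E⟩ lam / Aexp.Z lam := by
    rw [hzw]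
    field_simp
    linarith [hsplit]
  rw [key]
  -- rewrite filters on the RHS
  have hfle : Finset.filter (fun k : Fin d => (i : ℕ) ≤ (k : ℕ)) Finset.univ
      = Finset.filter (fun k => i ≤ k) Finset.univ := by
    refine Finset.filter_congr fun k _ => ?_
    rw [Fin.le_def]
  have hflt : Finset.filter (fun k : Fin d => (i : ℕ) + 1 ≤ (k : ℕ)) Finset.univ
      = Finset.filter (fun k => i < k) Finset.univ := by
    refine Finset.filter_congr fun k _ => ?_
    rw [Fin.lt_def]
    omega
  rw [hfle, hflt]
  -- identify the two sides via the isolated copies W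
  have hCE : insert (eset i)
        (E0 ∪ Finset.image eset (Finset.filter (fun k => i < k) Finset.univ))
      = E0 ∪ Finset.image eset (Finset.filter (fun k => i ≤ k) Finset.univ) := by
    ext e'
    simp only [Finset.mem_insert, Finset.mem_union, Finset.mem_image, Finset.mem_filter,
      Finset.mem_univ, true_and]
    constructor
    · rintro (rfl | he | ⟨k, hk, rfl⟩)
      · exact Or.inr ⟨i, le_refl i, rfl⟩
      · exact Or.inl he
      · exact Or.inr ⟨k, le_of_lt hk, rfl⟩
    · rintro (he | ⟨k, hk, rfl⟩)
      · exact Or.inr (Or.inl he)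
      · rcases eq_or_lt_of_le hk with heq | h
        · exact Or.inl (by rw [← heq])
        · exact Or.inr (Or.inr ⟨k, h, rfl⟩)
  have hWV : ∀ x ∈ W, x ∉ V' := by
    intro x hx
    obtain ⟨k, _, rfl⟩ := Finset.mem_image.mp hx
    exact fun hc => hvcfresh k (Finset.mem_of_mem_erase hc)
  have hWe : ∀ (EE : Finset (Finset ℕ)), (∀ e ∈ EE, e ⊆ G.V) →
      ∀ x ∈ W, ∀ e ∈ EE, x ∉ e := by
    intro EE hEE x hx e he hxe
    obtain ⟨k, _, rfl⟩ := Finset.mem_image.mp hx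
    exact hvcfresh k (hEE e he hxe)
  have hsubA : ∀ e ∈ E0 ∪ Finset.image eset (Finset.filter (fun k => i < k) Finset.univ),
      e ⊆ G.V := by
    intro e he
    rcases Finset.mem_union.mp he with h | h
    · exact hGE e (Finset.mem_filter.mp h).1
    · obtain ⟨k, _, rfl⟩ := Finset.mem_image.mp h
      exact hesetG k
  have hsubC : ∀ e ∈ E0 ∪ Finset.image eset (Finset.filter (fun k => i ≤ k) Finset.univ),
      e ⊆ G.V := by
    intro e he
    rcases Finset.mem_union.mp he with h | h
    · exact hGE e (Finset.mem_filter.mp h).1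
    · obtain ⟨k, _, rfl⟩ := Finset.mem_image.mp h
      exact hesetG k
  have hZA : Aexp.Z lam = (1 + lam) ^ W.card
      * Z ⟨V', E0 ∪ Finset.image eset (Finset.filter (fun k => i < k) Finset.univ)⟩ lam :=
    Z_union_iso V' _ W hWV (hWe _ hsubA)
  have hZC : Z ⟨Aexp.V, insert (eset i) Aexp.E⟩ lam = (1 + lam) ^ W.card
      * Z ⟨V', E0 ∪ Finset.image eset (Finset.filter (fun k => i ≤ k) Finset.univ)⟩ lam := by
    show Z ⟨V' ∪ W,
      insert (eset i) (E0 ∪ Finset.image eset (Finset.filter (fun k => i < k) Finset.univ))⟩ lam = _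
    rw [hCE]
    exact Z_union_iso V' _ W hWV (hWe _ hsubC)
  rw [hZC, hZA, mul_div_mul_left]
  positivity
end HGraph

open Finset HGraph in
open scoped Classical in
/-- Lemma: recursion for the marginal ratio in the hypergraph hardcore model.
    `v` has degree `d`, with incident hyperedges `e i = insert v (eset i)` where
    `eset i = {vij i 0, …, vij i (w i − 1)}` (so `vij i j` is the paper's
    v_{i,j+1}).  `G'` splits `v` into fresh copies `vc i`, one per incident edge,
    and `Gij i j` (the paper's G_{i+1,j+1}) is obtained from `G'` by deleting the
    vertices {vc k : k ≥ i}, then the hyperedges derived from {e k : k ≤ i}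
    (which at that point are `eset i` and `insert (vc k) (eset k)` for k < i),
    and then the vertices {vij i k : k < j}.  Then
    R_v = λ·∏ᵢ(1 − ∏ⱼ R_{ij}/(1+R_{ij})). -/
theorem stmt_0 (lam : ℝ) (hlam : 0 < lam)
    (G : HGraph) (hGE : ∀ e ∈ G.E, e ⊆ G.V) (hGne : ∅ ∉ G.E)
    (v : ℕ) (hv : v ∈ G.V)
    (d : ℕ) (w : Fin d → ℕ) (vij : Fin d → ℕ → ℕ)
    (hvmem : ∀ i j, j < w i → vij i j ∈ G.V)
    (hvne : ∀ i j, j < w i → vij i j ≠ v)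
    (hvinj : ∀ i, Set.InjOn (vij i) {j : ℕ | j < w i})
    (eset : Fin d → Finset ℕ)
    (heset : ∀ i, eset i = Finset.image (vij i) (Finset.range (w i)))
    (hmem : ∀ i, insert v (eset i) ∈ G.E)
    (hinc : ∀ e ∈ G.E, v ∈ e ↔ ∃ i, e = insert v (eset i))
    (hedist : Function.Injective (fun i => insert v (eset i)))
    (hnosub : ∀ i, eset i ∉ G.E)
    (vc : Fin d → ℕ) (hvcinj : Function.Injective vc) (hvcfresh : ∀ i, vc i ∉ G.V)
    (G' : HGraph)
    (hG' : G' = ⟨(G.V.erase v) ∪ Finset.image vc Finset.univ,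
        (G.E.filter (fun e => v ∉ e)) ∪
          Finset.image (fun i => insert (vc i) (eset i)) Finset.univ⟩)
    (Gij : Fin d → ℕ → HGraph)
    (hGij : ∀ (i : Fin d), ∀ j < w i, Gij i j =
        HGraph.delVs
          (HGraph.delEs
            (HGraph.delVs G' (Finset.image vc (Finset.filter (fun k => i ≤ k) Finset.univ)))
            (insert (eset i)
              (Finset.image (fun k => insert (vc k) (eset k))
                (Finset.filter (fun k => k < i) Finset.univ))))
          (Finset.image (vij i) (Finset.range j)))
    (R : ℝ) (hR : R = G.Rratio lam v)
    (Rij : Fin d → ℕ → ℝ)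
    (hRij : ∀ (i : Fin d), ∀ j < w i, Rij i j = (Gij i j).Rratio lam (vij i j)) :
    R = lam * ∏ i : Fin d, (1 - ∏ j ∈ Finset.range (w i), Rij i j / (1 + Rij i j)) := by
  classical
  subst hR
  subst hG'
  by_cases hwpos : ∀ k, 0 < w k
  · -- main case: every incident hyperedge has another vertex besides v
    have hesetinj : Function.Injective eset := by
      intro a b hab
      exact hedist (show insert v (eset a) = insert v (eset b) by rw [hab])
    have hesetV : ∀ k, eset k ⊆ G.V.erase v := by
      intro k x hx
      rw [heset k] at hx
      obtain ⟨j, hj, rfl⟩ := Finset.mem_image.mp hx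
      rw [Finset.mem_range] at hj
      exact Finset.mem_erase.mpr ⟨hvne k j hj, hvmem k j hj⟩
    have hesetne : ∀ k, (eset k).Nonempty := by
      intro k
      refine ⟨vij k 0, ?_⟩
      rw [heset k]
      exact Finset.mem_image.mpr ⟨0, Finset.mem_range.mpr (hwpos k), rfl⟩
    have hvnotin : ∀ k, v ∉ eset k := fun k hc =>
      (Finset.mem_erase.mp (hesetV k hc)).1 rfl
    set V' := G.V.erase v with hV'
    set E0 := G.E.filter (fun e => v ∉ e) with hE0
    set F : ℕ → ℝ := fun s =>
      Z ⟨V', E0 ∪ Finset.image eset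
        (Finset.filter (fun k : Fin d => s ≤ (k : ℕ)) Finset.univ)⟩ lam with hF
    have hFs : ∀ s : ℕ, F s = Z ⟨V', E0 ∪ Finset.image eset
        (Finset.filter (fun k : Fin d => s ≤ (k : ℕ)) Finset.univ)⟩ lam := fun s => rfl
    have hFpos : ∀ s, 0 < F s := by
      intro s
      refine Z_pos hlam ?_
      intro hc
      rcases Finset.mem_union.mp hc with h | h
      · exact hGne (Finset.mem_filter.mp h).1
      · obtain ⟨k, _, hk⟩ := Finset.mem_image.mp h
        exact (hesetne k).ne_empty hk
    have hZG : G.Z lam ≠ 0 := (Z_pos hlam hGne).ne'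
    -- the graph obtained by deleting v
    have hsd : ∀ e : Finset ℕ, v ∉ e → e \ {v} = e := by
      intro e he
      apply Finset.sdiff_eq_self_of_disjoint
      rw [Finset.disjoint_left]
      intro x hx hxs
      rw [Finset.mem_singleton] at hxs
      exact he (hxs ▸ hx)
    have hins : ∀ k, insert v (eset k) \ {v} = eset k := by
      intro k
      rw [Finset.insert_sdiff_of_mem _ (Finset.mem_singleton_self v), hsd _ (hvnotin k)]
    have hdel : G.delVs {v} =
        ⟨V', E0 ∪ Finset.image eset
          (Finset.filter (fun k : Fin d => 0 ≤ (k : ℕ)) Finset.univ)⟩ := by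
      rw [delVs]
      congr 1
      · rw [hV', Finset.erase_eq]
      · ext e'
        constructor
        · intro he'
          obtain ⟨e, he, rfl⟩ := Finset.mem_image.mp he'
          by_cases hve : v ∈ e
          · obtain ⟨k, rfl⟩ := (hinc e he).mp hve
            rw [hins k]
            exact Finset.mem_union_right _ (Finset.mem_image.mpr
              ⟨k, Finset.mem_filter.mpr ⟨Finset.mem_univ k, Nat.zero_le _⟩, rfl⟩)
          · rw [hsd e hve]
            exact Finset.mem_union_left _ (Finset.mem_filter.mpr ⟨he, hve⟩)
        · intro he'
          rcases Finset.mem_union.mp he' with h | h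
          · exact Finset.mem_image.mpr ⟨e', (Finset.mem_filter.mp h).1,
              hsd e' (Finset.mem_filter.mp h).2⟩
          · obtain ⟨k, _, rfl⟩ := Finset.mem_image.mp h
            exact Finset.mem_image.mpr ⟨insert v (eset k), hmem k, hins k⟩
    have hMd : F d = Z ⟨V', E0⟩ lam := by
      rw [hFs d]
      have hempty : Finset.filter (fun k : Fin d => d ≤ (k : ℕ)) Finset.univ = ∅ := by
        apply Finset.filter_false_of_mem
        intro k _
        exact not_le.mpr k.isLt
      rw [hempty, Finset.image_empty, Finset.union_empty]
    have hstepA : G.Rratio lam v = lam * F 0 / F d := by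
      rw [Rratio_eq_div hlam G v hZG, Nin_eq hlam G hv, hdel, Nout_eq G v, ← hV', ← hE0, ← hMd,
        ← hFs 0]
    have hstepB : ∀ i : Fin d,
        (1 - ∏ j ∈ Finset.range (w i), Rij i j / (1 + Rij i j))
          = F (i : ℕ) / F ((i : ℕ) + 1) := by
      intro i
      rw [hFs (i : ℕ), hFs ((i : ℕ) + 1)]
      exact stepB lam hlam G hGE hGne v d w vij hvmem hvne hvinj eset heset hnosub hesetinj
        vc hvcinj hvcfresh Gij hGij Rij hRij hwpos i
    calc G.Rratio lam v = lam * F 0 / F d := hstepA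
      _ = lam * (F 0 / F d) := by rw [mul_div_assoc]
      _ = lam * ∏ s ∈ Finset.range d, F s / F (s + 1) := by
          rw [prod_div_telescope F d (fun s _ => (hFpos s).ne')]
      _ = lam * ∏ i : Fin d, F (i : ℕ) / F ((i : ℕ) + 1) := by
          rw [Fin.prod_univ_eq_prod_range (fun s => F s / F (s + 1)) d]
      _ = lam * ∏ i : Fin d, (1 - ∏ j ∈ Finset.range (w i), Rij i j / (1 + Rij i j)) := by
          rw [Finset.prod_congr rfl (fun i _ => (hstepB i).symm)]
  · -- degenerate case: some incident hyperedge is {v}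
    push_neg at hwpos
    obtain ⟨k, hk0⟩ := hwpos
    have hk : w k = 0 := Nat.le_zero.mp hk0
    have hek : eset k = ∅ := by
      rw [heset k, hk, Finset.range_zero, Finset.image_empty]
    have hvE : {v} ∈ G.E := by
      have := hmem k
      rw [hek] at this
      simpa using this
    have hNin : G.Nin lam v = 0 := by
      rw [HGraph.Nin]
      refine Finset.sum_eq_zero fun I _ => ?_
      rw [if_neg]
      rintro ⟨hind, hvI⟩
      exact hind {v} hvE (Finset.singleton_subset_iff.mpr hvI)
    have hL : G.Rratio lam v = 0 := by
      rw [HGraph.Rratio, HGraph.prob_in_eq, hNin]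
      simp
    have hzero : (1 - ∏ j ∈ Finset.range (w k), Rij k j / (1 + Rij k j)) = 0 := by
      rw [hk]
      simp
    rw [hL, Finset.prod_eq_zero (Finset.mem_univ k) hzero, mul_zero]
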